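/- Let P_{ij}, for i = 1,...,m and j = 1,...,n, be i.i.d. uniform random variables on [0,1] (all hypotheses null). Family i is selected if min_j P_{ij} < q, and within a selected family a type I error occurs (V_i ≥ 1) if min_j P_{ij} < q/n. Then the expected average over the selected families of the indicator I{V_i ≥ 1} (defined as 0 when no family is selected) equals (1 - (1 - q/n)^n) · (1 - (1-q)^{nm}) / (1 - (1-q)^n). -/

import Mathlib

open MeasureTheory
open scoped Classical

namespace Stmt1Aux

noncomputable section


def tv {m : ℕ} (v : Fin m → Fin 3) : ℕ := (Finset.univ.filter (fun i => v i = 2)).card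
def kv {m : ℕ} (v : Fin m → Fin 3) : ℕ := (Finset.univ.filter (fun i => v i ≠ 0)).card

lemma tv_le_kv {m : ℕ} (v : Fin m → Fin 3) : tv v ≤ kv v := by
  apply Finset.card_le_card
  intro i hi
  simp only [Finset.mem_filter, Finset.mem_univ, true_and] at hi
  simp only [Finset.mem_filter, Finset.mem_univ, true_and, hi]
  decide

lemma prod_ite_pow {ι : Type*} (s : Finset ι) (p : ι → Prop) [DecidablePred p] (c : ℝ) :
    ∏ j ∈ s, (if p j then c else 1) = c ^ (s.filter p).card := by
  rw [← Finset.prod_filter_mul_prod_filter_not s p]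
  have h1 : ∏ j ∈ s.filter p, (if p j then c else 1) = c ^ (s.filter p).card := by
    rw [Finset.prod_congr rfl (fun j hj => if_pos (Finset.mem_filter.mp hj).2),
      Finset.prod_const]
  have h2 : ∏ j ∈ s.filter (fun j => ¬ p j), (if p j then c else 1) = 1 := by
    rw [Finset.prod_congr rfl (fun j hj => if_neg (Finset.mem_filter.mp hj).2),
      Finset.prod_const, one_pow]
  rw [h1, h2, mul_one]

lemma keyPoly (m : ℕ) (w : Fin 3 → ℝ) (z : ℝ) :
    ∑ v : Fin m → Fin 3, (tv v : ℝ) * z ^ (kv v - 1) * ∏ i, w (v i)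
      = m * w 2 * (w 0 + (w 1 + w 2) * z) ^ (m - 1) := by
  have htv : ∀ v : Fin m → Fin 3, ((tv v : ℝ)) = ∑ i, (if v i = 2 then (1:ℝ) else 0) := by
    intro v
    rw [Finset.sum_boole]
    rfl
  calc ∑ v : Fin m → Fin 3, (tv v : ℝ) * z ^ (kv v - 1) * ∏ i, w (v i)
      = ∑ v : Fin m → Fin 3, ∑ i, (if v i = 2 then (1:ℝ) else 0) * (z ^ (kv v - 1) * ∏ j, w (v j)) := by
        refine Finset.sum_congr rfl fun v _ => ?_
        rw [← Finset.sum_mul, ← htv, mul_assoc]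
    _ = ∑ i : Fin m, ∑ v : Fin m → Fin 3, (if v i = 2 then (1:ℝ) else 0) * (z ^ (kv v - 1) * ∏ j, w (v j)) := Finset.sum_comm
    _ = ∑ i : Fin m, w 2 * (w 0 + (w 1 + w 2) * z) ^ (m - 1) := by
        refine Finset.sum_congr rfl fun i _ => ?_
        have key : ∀ v : Fin m → Fin 3,
            (if v i = 2 then (1:ℝ) else 0) * (z ^ (kv v - 1) * ∏ j, w (v j))
              = ∏ j, (if j = i then (if v j = 2 then w 2 else 0)
                      else w (v j) * (if v j = 0 then 1 else z)) := by
          intro v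
          by_cases h : v i = 2
          · rw [if_pos h]
            rw [← Finset.mul_prod_erase Finset.univ (fun j => w (v j)) (Finset.mem_univ i)]
            have hstep : ∀ j ∈ Finset.univ.erase i,
                (if j = i then (if v j = 2 then w 2 else 0)
                  else w (v j) * (if v j = 0 then 1 else z))
                = w (v j) * (if v j = 0 then 1 else z) :=
              fun j hj => if_neg (Finset.ne_of_mem_erase hj)
            have hiff : ∀ j : Fin m, (if v j = 0 then (1:ℝ) else z) = (if ¬ (v j = 0) then z else 1) := by
              intro j
              by_cases hj : v j = 0
              · rw [if_pos hj, if_neg (not_not_intro hj)]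
              · rw [if_neg hj, if_pos hj]
            have hcard : ((Finset.univ.erase i).filter (fun j => ¬ v j = 0)).card = kv v - 1 := by
              rw [Finset.filter_erase, Finset.card_erase_of_mem]
              · rfl
              · simp only [Finset.mem_filter, Finset.mem_univ, true_and, h]
                decide
            have hprod : ∏ j ∈ Finset.univ.erase i,
                (if j = i then (if v j = 2 then w 2 else 0)
                  else w (v j) * (if v j = 0 then 1 else z))
                = (∏ j ∈ Finset.univ.erase i, w (v j)) * z ^ (kv v - 1) := by
              rw [Finset.prod_congr rfl hstep, Finset.prod_mul_distrib]
              congr 1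
              simp_rw [hiff]
              rw [prod_ite_pow, hcard]
            have hhead : (if i = i then (if v i = 2 then w 2 else 0)
                  else w (v i) * (if v i = 0 then 1 else z)) = w 2 := by
              rw [if_pos (rfl : i = i), if_pos h]
            rw [← Finset.mul_prod_erase Finset.univ
                (fun j => if j = i then (if v j = 2 then w 2 else 0)
                  else w (v j) * (if v j = 0 then 1 else z)) (Finset.mem_univ i),
              hhead, hprod, h]
            ring
          · rw [if_neg h, zero_mul]
            rw [Finset.prod_eq_zero (Finset.mem_univ i)]
            rw [if_pos rfl, if_neg h]
        simp_rw [key]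
        rw [← Fintype.prod_sum (fun j a => (if j = i then (if a = 2 then w 2 else 0)
                      else w a * (if a = 0 then 1 else z)))]
        rw [← Finset.mul_prod_erase Finset.univ _ (Finset.mem_univ i)]
        have h1 : (∑ a : Fin 3, if i = i then (if a = 2 then w 2 else 0)
                      else w a * (if a = 0 then 1 else z)) = w 2 := by
          rw [Fin.sum_univ_three]
          rw [if_pos (rfl : i = i), if_pos (rfl : i = i), if_pos (rfl : i = i)]
          rw [if_neg (show ¬((0:Fin 3) = 2) by decide), if_neg (show ¬((1:Fin 3) = 2) by decide),
            if_pos (show (2:Fin 3) = 2 from rfl)]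
          ring
        have h2 : ∀ j ∈ Finset.univ.erase i,
            (∑ a : Fin 3, if j = i then (if a = 2 then w 2 else 0)
                      else w a * (if a = 0 then 1 else z)) = w 0 + (w 1 + w 2) * z := by
          intro j hj
          have hji : ¬ j = i := Finset.ne_of_mem_erase hj
          rw [Fin.sum_univ_three, if_neg hji, if_neg hji, if_neg hji,
            if_pos (show (0:Fin 3) = 0 from rfl), if_neg (show ¬((1:Fin 3) = 0) by decide),
            if_neg (show ¬((2:Fin 3) = 0) by decide)]
          ring
        rw [h1, Finset.prod_congr rfl h2, Finset.prod_const, Finset.card_erase_of_mem (Finset.mem_univ i)]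
        simp
    _ = m * w 2 * (w 0 + (w 1 + w 2) * z) ^ (m - 1) := by
        rw [Finset.sum_const, Finset.card_univ, Fintype.card_fin, nsmul_eq_mul]
        ring

lemma intRep (t k : ℕ) (h : k = 0 → t = 0) :
    (t : ℝ) / ((max k 1 : ℕ) : ℝ) = ∫ z in (0:ℝ)..1, (t : ℝ) * z ^ (k - 1) := by
  rcases Nat.eq_zero_or_pos k with hk | hk
  · simp [hk, h hk]
  · rw [intervalIntegral.integral_const_mul, integral_pow]
    rw [Nat.max_eq_left hk, Nat.sub_add_cancel hk, one_pow, zero_pow (by omega : k ≠ 0),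
      Nat.cast_sub hk]
    push_cast
    ring

lemma main_alg (m : ℕ) (w : Fin 3 → ℝ) (hp : w 1 + w 2 ≠ 0) :
    ∑ v : Fin m → Fin 3, (tv v : ℝ) / ((max (kv v) 1 : ℕ) : ℝ) * ∏ i, w (v i)
      = w 2 * ((w 0 + (w 1 + w 2)) ^ m - (w 0) ^ m) / (w 1 + w 2) := by
  have step1 : ∀ v : Fin m → Fin 3,
      (tv v : ℝ) / ((max (kv v) 1 : ℕ) : ℝ) * ∏ i, w (v i)
        = ∫ z in (0:ℝ)..1, (tv v : ℝ) * z ^ (kv v - 1) * ∏ i, w (v i) := by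
    intro v
    rw [intervalIntegral.integral_mul_const, ← intRep]
    intro hk
    have := tv_le_kv v
    omega
  simp_rw [step1]
  rw [← intervalIntegral.integral_finset_sum]
  · rw [intervalIntegral.integral_congr
      (g := fun z => (m:ℝ) * w 2 * (w 0 + (w 1 + w 2) * z) ^ (m - 1))
      (fun z _ => keyPoly m w z)]
    set p := w 1 + w 2 with hpdef
    have hderiv : ∀ z ∈ Set.uIcc (0:ℝ) 1,
        HasDerivAt (fun z : ℝ => w 2 * ((w 0 + p * z) ^ m / p))
          ((m:ℝ) * w 2 * (w 0 + p * z) ^ (m - 1)) z := by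
      intro z _
      have h1 : HasDerivAt (fun z : ℝ => w 0 + p * z) p z := by
        simpa using ((hasDerivAt_id z).const_mul p).const_add (w 0)
      have h3 := ((h1.pow m).div_const p).const_mul (w 2)
      refine h3.congr_deriv ?_
      rw [mul_div_assoc, div_self hp, mul_one]
      ring
    rw [intervalIntegral.integral_eq_sub_of_hasDerivAt hderiv]
    · rw [mul_one, mul_zero, add_zero]
      ring
    · apply Continuous.intervalIntegrable
      fun_prop
  · intro v _
    apply Continuous.intervalIntegrable
    fun_prop



def Nc (n : ℕ) (c : ℝ) : Set (Fin n → ℝ) := {y | ∀ j, ¬ y j < c}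

lemma Nc_eq (n : ℕ) (c : ℝ) : Nc n c = Set.pi Set.univ (fun _ => Set.Ici c) := by
  ext y; simp [Nc, Set.mem_pi, not_lt, Pi.le_def]

lemma measurable_Nc (n : ℕ) (c : ℝ) : MeasurableSet (Nc n c) := by
  rw [Nc_eq]; exact MeasurableSet.univ_pi fun _ => measurableSet_Ici

instance : IsProbabilityMeasure (volume.restrict (Set.Icc (0:ℝ) 1)) := by
  constructor
  rw [Measure.restrict_apply_univ, Real.volume_Icc]
  norm_num

lemma measure_Nc (n : ℕ) (c : ℝ) (h0 : 0 ≤ c) (h1 : c ≤ 1) :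
    Measure.pi (fun _ : Fin n => volume.restrict (Set.Icc (0 : ℝ) 1)) (Nc n c)
      = ENNReal.ofReal ((1 - c) ^ n) := by
  rw [Nc_eq, Measure.pi_pi]
  have h : (volume.restrict (Set.Icc (0:ℝ) 1)) (Set.Ici c) = ENNReal.ofReal (1 - c) := by
    have hset : Set.Ici c ∩ Set.Icc 0 1 = Set.Icc c 1 := by
      ext t
      simp only [Set.mem_inter_iff, Set.mem_Ici, Set.mem_Icc]
      constructor
      · rintro ⟨h₁, _, h₃⟩; exact ⟨h₁, h₃⟩
      · rintro ⟨h₁, h₂⟩; exact ⟨h₁, by linarith, h₂⟩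
    rw [Measure.restrict_apply measurableSet_Ici, hset, Real.volume_Icc]
  simp_rw [h]
  rw [Finset.prod_const, Finset.card_univ, Fintype.card_fin,
    ← ENNReal.ofReal_pow (by linarith)]

def patf (n : ℕ) (q : ℝ) (y : Fin n → ℝ) : Fin 3 :=
  if ∃ j, y j < q / n then 2 else if ∃ j, y j < q then 1 else 0

variable {n : ℕ} {q : ℝ}

lemma pat2_iff (y : Fin n → ℝ) : patf n q y = 2 ↔ ∃ j, y j < q / n := by
  unfold patf
  split_ifs with h h'
  · simp [h]
  · simp [h]
  · simp [h]

lemma pat0_iff (hqn : q / n ≤ q) (y : Fin n → ℝ) : patf n q y = 0 ↔ ¬ ∃ j, y j < q := by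
  unfold patf
  split_ifs with h h'
  · refine iff_of_false (by decide) ?_
    push_neg
    obtain ⟨j, hj⟩ := h
    exact ⟨j, lt_of_lt_of_le hj hqn⟩
  · exact iff_of_false (by decide) (by simpa using h')
  · simpa using h'

lemma pat1_iff (y : Fin n → ℝ) : patf n q y = 1 ↔ (¬ ∃ j, y j < q / n) ∧ ∃ j, y j < q := by
  unfold patf
  split_ifs with h h'
  · refine iff_of_false (by decide) ?_
    tauto
  · simp [h, h']
  · refine iff_of_false (by decide) ?_
    tauto

lemma pat0_set (hqn : q / n ≤ q) : patf n q ⁻¹' {0} = Nc n q := by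
  ext y
  simp only [Set.mem_preimage, Set.mem_singleton_iff, pat0_iff hqn, Nc, Set.mem_setOf_eq,
    not_exists]

lemma pat2_set : patf n q ⁻¹' {2} = (Nc n (q / n))ᶜ := by
  ext y
  simp only [Set.mem_preimage, Set.mem_singleton_iff, pat2_iff, Nc, Set.mem_compl_iff,
    Set.mem_setOf_eq, not_forall, not_not]

lemma pat1_set : patf n q ⁻¹' {1} = Nc n (q / n) \ Nc n q := by
  ext y
  simp only [Set.mem_preimage, Set.mem_singleton_iff, pat1_iff, Nc, Set.mem_diff,
    Set.mem_setOf_eq, not_exists, not_forall, not_not]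

lemma measurable_pat (hqn : q / n ≤ q) : ∀ a : Fin 3, MeasurableSet (patf n q ⁻¹' {a}) := by
  intro a
  rcases (by decide : ∀ b : Fin 3, b = 0 ∨ b = 1 ∨ b = 2) a with h|h|h <;> subst h
  · rw [pat0_set hqn]; exact measurable_Nc n q
  · rw [pat1_set]; exact (measurable_Nc n (q/n)).diff (measurable_Nc n q)
  · rw [pat2_set]; exact (measurable_Nc n (q/n)).compl

lemma measure_pat (hn : 1 ≤ n) (hq0 : 0 < q) (hq1 : q < 1) :
    ∀ a : Fin 3,
      ((Measure.pi (fun _ : Fin n => volume.restrict (Set.Icc (0 : ℝ) 1)))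
          (patf n q ⁻¹' {a})).toReal
        = ![(1-q)^n, (1-q/n)^n - (1-q)^n, 1 - (1-q/n)^n] a := by
  have hn' : (1:ℝ) ≤ n := by exact_mod_cast hn
  have hn0 : (0:ℝ) < n := by linarith
  have hqn0 : 0 < q / n := div_pos hq0 hn0
  have hqnq : q / n ≤ q := div_le_self hq0.le hn'
  have hc1 : (0:ℝ) ≤ 1 - q := by linarith
  have hc2 : (0:ℝ) ≤ 1 - q / n := by linarith
  have hle : (1-q)^n ≤ (1-q/n)^n := pow_le_pow_left₀ hc1 (by linarith) n
  have hle1 : (1-q/n)^n ≤ 1 := pow_le_one₀ hc2 (by linarith)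
  have hsub : Nc n q ⊆ Nc n (q / n) := by
    intro y hy j hj
    exact hy j (lt_of_lt_of_le hj hqnq)
  intro a
  rcases (by decide : ∀ b : Fin 3, b = 0 ∨ b = 1 ∨ b = 2) a with h|h|h <;> subst h
  · rw [pat0_set hqnq, measure_Nc n q hq0.le hq1.le, ENNReal.toReal_ofReal (by positivity)]
    simp
  · rw [pat1_set, measure_diff hsub (measurable_Nc n q).nullMeasurableSet (measure_ne_top _ _),
      measure_Nc n q hq0.le hq1.le, measure_Nc n (q/n) hqn0.le (by linarith),
      ENNReal.toReal_sub_of_le (ENNReal.ofReal_le_ofReal hle) ENNReal.ofReal_ne_top,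
      ENNReal.toReal_ofReal (by positivity), ENNReal.toReal_ofReal (by positivity)]
    simp
  · rw [pat2_set, prob_compl_eq_one_sub (measurable_Nc n (q/n)),
      measure_Nc n (q/n) hqn0.le (by linarith),
      ENNReal.toReal_sub_of_le (ENNReal.ofReal_le_one.mpr hle1) ENNReal.one_ne_top,
      ENNReal.toReal_one, ENNReal.toReal_ofReal (by positivity)]
    simp


end
end Stmt1Aux

/-- The closed form of Appendix A: with `m` all-null families of `n` i.i.d. Uniform(0,1)
p-values, a family is selected when its minimal p-value is below `q`, and a type I error
occurs in it (under Bonferroni at level `q`) when its minimal p-value is below `q/n`.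
The expected average over the selected families of `I{V_i ≥ 1}` (taken as 0 when no
family is selected) equals `(1-(1-q/n)^n)(1-(1-q)^{nm})/(1-(1-q)^n)`. -/
theorem stmt1 (m n : ℕ) (hm : 1 ≤ m) (hn : 1 ≤ n) (q : ℝ) (hq0 : 0 < q) (hq1 : q < 1) :
    ∫ x : Fin m → Fin n → ℝ,
      (∑ i ∈ Finset.univ.filter (fun i : Fin m => ∃ j, x i j < q),
        (if ∃ j, x i j < q / n then (1 : ℝ) else 0)) /
      ((max (Finset.univ.filter (fun i : Fin m => ∃ j, x i j < q)).card 1 : ℕ) : ℝ)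
      ∂ Measure.pi (fun _ : Fin m => Measure.pi (fun _ : Fin n =>
          volume.restrict (Set.Icc (0 : ℝ) 1)))
    = (1 - (1 - q / n) ^ n) * (1 - (1 - q) ^ (n * m)) / (1 - (1 - q) ^ n) := by
  classical
  have hn' : (1:ℝ) ≤ n := by exact_mod_cast hn
  have hn0 : (0:ℝ) < n := by linarith
  have hqn0 : 0 < q / n := div_pos hq0 hn0
  have hqnq : q / n ≤ q := div_le_self hq0.le hn'
  set wv : Fin 3 → ℝ := ![(1-q)^n, (1-q/n)^n - (1-q)^n, 1 - (1-q/n)^n] with hwv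
  set μn : Measure (Fin n → ℝ) :=
    Measure.pi (fun _ : Fin n => volume.restrict (Set.Icc (0 : ℝ) 1)) with hμn
  set μ : Measure (Fin m → Fin n → ℝ) := Measure.pi (fun _ : Fin m => μn) with hμ
  haveI : IsProbabilityMeasure μn := by rw [hμn]; infer_instance
  haveI : IsProbabilityMeasure μ := by rw [hμ]; infer_instance
  set S : (Fin m → Fin 3) → Set (Fin m → Fin n → ℝ) :=
    fun v => Set.pi Set.univ (fun i => Stmt1Aux.patf n q ⁻¹' {v i}) with hS
  have hSmeas : ∀ v, MeasurableSet (S v) :=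
    fun v => MeasurableSet.univ_pi (fun i => Stmt1Aux.measurable_pat hqnq (v i))
  have hx : ∀ (x : Fin m → Fin n → ℝ) (v : Fin m → Fin 3),
      x ∈ S v ↔ v = fun i => Stmt1Aux.patf n q (x i) := by
    intro x v
    simp only [hS, Set.mem_pi, Set.mem_univ, Set.mem_preimage, Set.mem_singleton_iff,
      forall_true_left]
    constructor
    · intro h; funext i; exact (h i).symm
    · intro h i; rw [h]
  have hpt : ∀ x : Fin m → Fin n → ℝ,
      (∑ i ∈ Finset.univ.filter (fun i : Fin m => ∃ j, x i j < q),
        (if ∃ j, x i j < q / n then (1 : ℝ) else 0)) /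
      ((max (Finset.univ.filter (fun i : Fin m => ∃ j, x i j < q)).card 1 : ℕ) : ℝ)
      = ∑ v : Fin m → Fin 3,
          (S v).indicator
            (fun _ => (Stmt1Aux.tv v : ℝ) / ((max (Stmt1Aux.kv v) 1 : ℕ) : ℝ)) x := by
    intro x
    rw [Finset.sum_eq_single (fun i => Stmt1Aux.patf n q (x i))]
    · rw [Set.indicator_of_mem ((hx x _).mpr rfl)]
      have hnum : (∑ i ∈ Finset.univ.filter (fun i : Fin m => ∃ j, x i j < q),
          (if ∃ j, x i j < q / n then (1 : ℝ) else 0))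
          = (Stmt1Aux.tv (fun i => Stmt1Aux.patf n q (x i)) : ℝ) := by
        rw [Finset.sum_boole, Finset.filter_filter]
        unfold Stmt1Aux.tv
        congr 2
        apply Finset.filter_congr
        intro i _
        rw [Stmt1Aux.pat2_iff]
        constructor
        · exact fun h => h.2
        · intro h
          obtain ⟨j, hj⟩ := h
          exact ⟨⟨j, lt_of_lt_of_le hj hqnq⟩, ⟨j, hj⟩⟩
      have hden : (Finset.univ.filter (fun i : Fin m => ∃ j, x i j < q)).card
          = Stmt1Aux.kv (fun i => Stmt1Aux.patf n q (x i)) := by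
        unfold Stmt1Aux.kv
        congr 1
        apply Finset.filter_congr
        intro i _
        rw [Ne, Stmt1Aux.pat0_iff hqnq, not_not]
      rw [hnum, hden]
    · intro v _ hv
      exact Set.indicator_of_notMem (fun hmem => hv ((hx x v).mp hmem)) _
    · intro h
      exact absurd (Finset.mem_univ _) h
  rw [integral_congr_ae (Filter.Eventually.of_forall hpt)]
  rw [integral_finset_sum _ (fun v _ => (integrable_const _).indicator (hSmeas v))]
  have hterm : ∀ v : Fin m → Fin 3,
      ∫ x, (S v).indicator
          (fun _ => (Stmt1Aux.tv v : ℝ) / ((max (Stmt1Aux.kv v) 1 : ℕ) : ℝ)) x ∂μ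
        = (Stmt1Aux.tv v : ℝ) / ((max (Stmt1Aux.kv v) 1 : ℕ) : ℝ) * ∏ i, wv (v i) := by
    intro v
    rw [integral_indicator_const _ (hSmeas v), smul_eq_mul, mul_comm]
    congr 1
    rw [hS, hμ, measureReal_def, Measure.pi_pi, ENNReal.toReal_prod]
    exact Finset.prod_congr rfl fun i _ =>
      Stmt1Aux.measure_pat hn hq0 hq1 (v i)
  rw [Finset.sum_congr rfl (fun v _ => hterm v)]
  rw [Stmt1Aux.main_alg m wv]
  · have h0 : wv 0 = (1-q)^n := by simp [hwv]
    have h1 : wv 1 = (1-q/n)^n - (1-q)^n := by simp [hwv]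
    have h2 : wv 2 = 1 - (1-q/n)^n := by simp [hwv]
    rw [h0, h1, h2, pow_mul]
    have hsum : ((1-q)^n + ((1-q/n)^n - (1-q)^n + (1 - (1-q/n)^n))) = 1 := by ring
    rw [hsum, one_pow]
    ring_nf
  · have h1 : wv 1 = (1-q/n)^n - (1-q)^n := by simp [hwv]
    have h2 : wv 2 = 1 - (1-q/n)^n := by simp [hwv]
    rw [h1, h2]
    have : (1-q)^n < 1 := by
      apply pow_lt_one₀ (by linarith) (by linarith) (by omega)
    intro hc
    nlinarith
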